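/- arXiv:2110.08563 — 7 statements merged into one kernel-verified Lean document; each statement's English description precedes it below -/
import Mathlib

section
/- Let $D$ be a divergence satisfying: (D4) $D(Q_\mathcal{E}\|P_\mathcal{E})\le D(Q\|P)$ for any sub-$\sigma$-algebra $\mathcal{E}$, and (D5) $D(Q_\mathcal{E}\|P_\mathcal{E})=D(Q\|P)$ whenever $dQ_\mathcal{E}/dP_\mathcal{E}=dQ/dP$ a.e. Fix $\eta>0$, a bounded measurable $\pi:\Theta\to\mathbb{R}$, a sub-$\sigma$-algebra $\mathcal{E}$, and set $\bar\pi = \mathbb{E}_P[\pi\mid\mathcal{E}]$. Then $\inf\{\mathbb{E}_Q[\bar\pi] : D(Q\|P)\le\eta\} \ge \inf\{\mathbb{E}_Q[\pi] : D(Q\|P)\le\eta\}$. -/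
open MeasureTheory
open scoped ENNReal

/-- Monotonicity of the worst-case expectation with respect to
conditional-expectation contractions (Proposition 3): for a divergence `D`
satisfying D3 (finiteness implies absolute continuity), D4 (monotonicity under
restriction) and D5 (equality under density-preserving restriction), the worst
case of the conditional expectation `E_P[π|m]` over the divergence ball is at
least the worst case of `π` itself. -/
theorem worstCase_condexp_ge
    {Ω : Type*} {m0 : MeasurableSpace Ω}
    (D : ∀ m : MeasurableSpace Ω, @Measure Ω m → @Measure Ω m → ℝ≥0∞)
    (P : Measure Ω) [IsProbabilityMeasure P]
    (hD3 : ∀ Q : Measure Ω, D m0 Q P ≠ ⊤ → Q ≪ P)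
    (hD4 : ∀ (m : MeasurableSpace Ω) (hm : m ≤ m0) (Q : @Measure Ω m0),
      D m (Q.trim hm) (P.trim hm) ≤ D m0 Q P)
    (hD5 : ∀ (m : MeasurableSpace Ω) (hm : m ≤ m0) (Q : @Measure Ω m0), Q ≪ P →
      ((fun ω => (Q.trim hm).rnDeriv (P.trim hm) ω) =ᵐ[P] fun ω => Q.rnDeriv P ω) →
      D m (Q.trim hm) (P.trim hm) = D m0 Q P)
    (η : ℝ≥0∞) (hη : 0 < η) (hη' : η ≠ ⊤)
    (π : Ω → ℝ) (hπm : Measurable π) (hπb : ∃ C, ∀ ω, |π ω| ≤ C)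
    {m : MeasurableSpace Ω} (hm : m ≤ m0) :
    sInf {r : ℝ | ∃ Q : @Measure Ω m0, IsProbabilityMeasure Q ∧ D m0 Q P ≤ η ∧
        r = ∫ ω, (P[π|m]) ω ∂Q}
      ≥ sInf {r : ℝ | ∃ Q : @Measure Ω m0, IsProbabilityMeasure Q ∧ D m0 Q P ≤ η ∧
        r = ∫ ω, π ω ∂Q} := by
  obtain ⟨C, hC⟩ := hπb
  haveI : IsFiniteMeasure (P.trim hm) := isFiniteMeasure_trim hm
  haveI : SigmaFinite (P.trim hm) := inferInstance
  set Abar := {r : ℝ | ∃ Q : @Measure Ω m0, IsProbabilityMeasure Q ∧ D m0 Q P ≤ η ∧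
      r = ∫ ω, (P[π|m]) ω ∂Q} with hAbar
  set A := {r : ℝ | ∃ Q : @Measure Ω m0, IsProbabilityMeasure Q ∧ D m0 Q P ≤ η ∧
      r = ∫ ω, π ω ∂Q} with hA
  -- key construction
  have key : ∀ Q : @Measure Ω m0, IsProbabilityMeasure Q → D m0 Q P ≤ η →
      (∫ ω, (P[π|m]) ω ∂Q) ∈ A := by
    intro Q hQprob hQη
    have hQP : Q ≪ P := hD3 Q (fun h => hη' (top_le_iff.mp (h ▸ hQη)))
    haveI : IsFiniteMeasure (Q.trim hm) := isFiniteMeasure_trim hm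
    set g := (Q.trim hm).rnDeriv (P.trim hm) with hgdef
    have hgm : Measurable[m] g := Measure.measurable_rnDeriv _ _
    have hgm0 : Measurable[m0] g := hgm.mono hm le_rfl
    set Q' := P.withDensity g with hQ'def
    have hWD : (P.trim hm).withDensity g = Q.trim hm :=
      Measure.withDensity_rnDeriv_eq _ _ (hQP.trim hm)
    have htrim : Q'.trim hm = Q.trim hm := by
      rw [hQ'def, trim_withDensity hm hgm, hWD]
    have hQ'P : Q' ≪ P := withDensity_absolutelyContinuous _ _
    have hQ'prob : IsProbabilityMeasure Q' := by
      constructor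
      have h1 : Q' Set.univ = Q'.trim hm Set.univ :=
        (trim_measurableSet_eq hm MeasurableSet.univ).symm
      rw [h1, htrim, trim_measurableSet_eq hm MeasurableSet.univ]
      exact measure_univ
    have hrn : Q'.rnDeriv P =ᵐ[P] g := Measure.rnDeriv_withDensity P hgm0
    have hDle : D m0 Q' P ≤ η := by
      have h5 : D m (Q'.trim hm) (P.trim hm) = D m0 Q' P := by
        refine hD5 m hm Q' hQ'P ?_
        rw [htrim]
        exact hrn.symm
      rw [← h5, htrim]
      exact le_trans (hD4 m hm Q) hQη
    -- integral of g is 1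
    have hgint1 : ∫⁻ ω, g ω ∂P = 1 := by
      rw [← lintegral_trim hm hgm]
      have : ∫⁻ ω, g ω ∂(P.trim hm) = ((P.trim hm).withDensity g) Set.univ := by
        rw [withDensity_apply _ MeasurableSet.univ, Measure.restrict_univ]
      rw [this, hWD, trim_measurableSet_eq hm MeasurableSet.univ]
      exact measure_univ
    have hgInt : Integrable (fun ω => (g ω).toReal) P :=
      integrable_toReal_of_lintegral_ne_top hgm0.aemeasurable (by simp [hgint1])
    have hmulInt : Integrable (fun ω => π ω * (g ω).toReal) P :=
      hgInt.bdd_mul hπm.aestronglyMeasurable (c := C) (Filter.Eventually.of_forall fun ω => by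
        simpa using hC ω)
    have hmulInt' : Integrable (fun ω => (g ω).toReal * π ω) P := by
      simpa [mul_comm] using hmulInt
    -- ∫ π̄ dQ = ∫ π̄ dQ'
    have h1 : ∫ ω, (P[π|m]) ω ∂Q = ∫ ω, (P[π|m]) ω ∂Q' := by
      rw [integral_trim hm (stronglyMeasurable_condExp (f := π) (μ := P) (m := m)) (μ := Q),
        integral_trim hm (stronglyMeasurable_condExp (f := π) (μ := P) (m := m)) (μ := Q'),
        htrim]
    -- ∫ π̄ dQ' = ∫ π dQ'
    have hgsm : StronglyMeasurable[m] (fun ω => (g ω).toReal) :=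
      (hgm.ennreal_toReal).stronglyMeasurable
    have hcond : P[(fun ω => (g ω).toReal * π ω)|m]
        =ᵐ[P] (fun ω => (g ω).toReal) * P[π|m] := by
      have hπint : Integrable π P :=
        ⟨hπm.aestronglyMeasurable, HasFiniteIntegral.of_bounded (C := C)
          (Filter.Eventually.of_forall (fun ω => by simpa using hC ω))⟩
      exact condExp_mul_of_stronglyMeasurable_left hgsm hmulInt' hπint
    have h2 : ∫ ω, (P[π|m]) ω ∂Q' = ∫ ω, π ω ∂Q' := by
      rw [← integral_rnDeriv_smul hQ'P (f := P[π|m]), ← integral_rnDeriv_smul hQ'P (f := π)]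
      have e1 : ∫ ω, (Q'.rnDeriv P ω).toReal • (P[π|m]) ω ∂P
          = ∫ ω, (g ω).toReal * (P[π|m]) ω ∂P := by
        refine integral_congr_ae ?_
        filter_upwards [hrn] with ω hω
        rw [hω]; rfl
      have e2 : ∫ ω, (Q'.rnDeriv P ω).toReal • π ω ∂P
          = ∫ ω, (g ω).toReal * π ω ∂P := by
        refine integral_congr_ae ?_
        filter_upwards [hrn] with ω hω
        rw [hω]; rfl
      rw [e1, e2, ← integral_condExp hm (f := fun ω => (g ω).toReal * π ω) (μ := P)]
      exact (integral_congr_ae hcond).symm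
    exact ⟨Q', hQ'prob, hDle, by rw [h1, h2]⟩
  -- lower bound on A
  have hAbdd : BddBelow A := by
    refine ⟨-C, fun r hr => ?_⟩
    obtain ⟨Q, hQprob, _, rfl⟩ := hr
    have hb : ‖∫ ω, π ω ∂Q‖ ≤ C * (Q Set.univ).toReal :=
      norm_integral_le_of_norm_le_const (Filter.Eventually.of_forall
        (fun ω => by simpa using hC ω))
    rw [measure_univ] at hb
    simp only [ENNReal.toReal_one, mul_one] at hb
    have := abs_le.mp (by simpa [Real.norm_eq_abs] using hb)
    linarith [this.1]
  by_cases hne : Abar.Nonempty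
  · refine le_csInf hne (fun r hr => ?_)
    obtain ⟨Q, hQprob, hQη, rfl⟩ := hr
    exact csInf_le hAbdd (key Q hQprob hQη)
  · have hAempty : A = ∅ := by
      by_contra h
      obtain ⟨r, Q, hQprob, hQη, _⟩ := Set.nonempty_iff_ne_empty.mpr h
      exact hne ⟨_, Q, hQprob, hQη, rfl⟩
    rw [Set.not_nonempty_iff_eq_empty] at hne
    rw [hne, hAempty]
end

section
/- Under the assumptions of the previous statement (divergence $D$ with properties D3–D5, bounded measurable $\pi$, $\bar\pi=\mathbb{E}_P[\pi\mid\mathcal{E}]$), the constrained minimum over coarse beliefs characterizes the worst case of $\bar\pi$: $\inf\{\mathbb{E}_Q[\bar\pi] : D(Q\|P)\le\eta\} = \inf\{\mathbb{E}_Q[\pi] : D(Q\|P)\le\eta,\ dQ/dP \text{ is } \mathcal{E}\text{-measurable}\}$. -/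
open MeasureTheory
open scoped ENNReal

/-- Key identity: if `Q ≪ P` has an `m`-measurable density w.r.t. `P`, then the
`Q`-expectation of `π` equals the `Q`-expectation of `P[π|m]`. -/
lemma integral_eq_integral_condexp_of_measurable_rnDeriv
    {Ω : Type*} {m0 : MeasurableSpace Ω}
    (P Q : Measure Ω) [IsProbabilityMeasure P] [IsFiniteMeasure Q]
    (hQP : Q ≪ P)
    {m : MeasurableSpace Ω} (hm : m ≤ m0)
    {f : Ω → ℝ≥0∞} (hfm : Measurable[m] f)
    (hQf : (fun ω => Q.rnDeriv P ω) =ᵐ[P] f)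
    {π : Ω → ℝ} (hπm : Measurable[m0] π) {C : ℝ} (hπb : ∀ ω, |π ω| ≤ C) :
    ∫ ω, π ω ∂Q = ∫ ω, (P[π|m]) ω ∂Q := by
  haveI : SigmaFinite (P.trim hm) := (isFiniteMeasure_trim hm).toSigmaFinite
  -- integrability facts
  have hπint : Integrable π P :=
    Integrable.mono' (integrable_const C) hπm.aestronglyMeasurable
      (Filter.Eventually.of_forall fun ω => by simpa [Real.norm_eq_abs] using hπb ω)
  have hgm : StronglyMeasurable[m] (fun ω => (f ω).toReal) :=
    (hfm.ennreal_toReal).stronglyMeasurable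
  have hgint : Integrable (fun ω => (f ω).toReal) P := by
    refine (Measure.integrable_toReal_rnDeriv (μ := Q) (ν := P)).congr ?_
    filter_upwards [hQf] with ω hω using by rw [hω]
  have hmulint : Integrable ((fun ω => (f ω).toReal) * π) P := by
    have h := Integrable.bdd_mul (c := C) hgint hπm.aestronglyMeasurable
      (Filter.Eventually.of_forall fun ω => by simpa [Real.norm_eq_abs] using hπb ω)
    refine h.congr (Filter.Eventually.of_forall fun ω => ?_)
    simp [mul_comm]
  -- pull-out property
  have hpull : P[(fun ω => (f ω).toReal) * π|m]
      =ᵐ[P] (fun ω => (f ω).toReal) * P[π|m] :=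
    condExp_mul_of_stronglyMeasurable_left hgm hmulint hπint
  have key : ∫ ω, (f ω).toReal * π ω ∂P = ∫ ω, (f ω).toReal * (P[π|m]) ω ∂P := by
    calc ∫ ω, (f ω).toReal * π ω ∂P
        = ∫ ω, ((fun ω => (f ω).toReal) * π) ω ∂P := by rfl
      _ = ∫ ω, (P[(fun ω => (f ω).toReal) * π|m]) ω ∂P :=
          (integral_condExp hm).symm
      _ = ∫ ω, ((fun ω => (f ω).toReal) * P[π|m]) ω ∂P := integral_congr_ae hpull
      _ = ∫ ω, (f ω).toReal * (P[π|m]) ω ∂P := by rfl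
  have h1 : ∫ ω, π ω ∂Q = ∫ ω, (f ω).toReal * π ω ∂P := by
    rw [← integral_rnDeriv_smul hQP (f := π)]
    refine integral_congr_ae ?_
    filter_upwards [hQf] with ω hω
    simp [hω, smul_eq_mul]
  have h2 : ∫ ω, (P[π|m]) ω ∂Q = ∫ ω, (f ω).toReal * (P[π|m]) ω ∂P := by
    rw [← integral_rnDeriv_smul hQP (f := fun ω => (P[π|m]) ω)]
    refine integral_congr_ae ?_
    filter_upwards [hQf] with ω hω
    simp [hω, smul_eq_mul]
  rw [h1, h2, key]

/-- The worst case of the conditional expectation `E_P[π|m]` over the divergence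
ball equals the worst case of `π` over beliefs in the ball whose density with
respect to `P` is `m`-measurable (key identity in the proof of Proposition 3). -/
theorem worstCase_condexp_eq_coarse
    {Ω : Type*} {m0 : MeasurableSpace Ω}
    (D : ∀ m : MeasurableSpace Ω, @Measure Ω m → @Measure Ω m → ℝ≥0∞)
    (P : Measure Ω) [IsProbabilityMeasure P]
    (hD3 : ∀ Q : Measure Ω, D m0 Q P ≠ ⊤ → Q ≪ P)
    (hD4 : ∀ (m : MeasurableSpace Ω) (hm : m ≤ m0) (Q : @Measure Ω m0),
      D m (Q.trim hm) (P.trim hm) ≤ D m0 Q P)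
    (hD5 : ∀ (m : MeasurableSpace Ω) (hm : m ≤ m0) (Q : @Measure Ω m0), Q ≪ P →
      ((fun ω => (Q.trim hm).rnDeriv (P.trim hm) ω) =ᵐ[P] fun ω => Q.rnDeriv P ω) →
      D m (Q.trim hm) (P.trim hm) = D m0 Q P)
    (η : ℝ≥0∞) (hη : 0 < η) (hη' : η ≠ ⊤)
    (π : Ω → ℝ) (hπm : Measurable π) (hπb : ∃ C, ∀ ω, |π ω| ≤ C)
    {m : MeasurableSpace Ω} (hm : m ≤ m0) :
    sInf {r : ℝ | ∃ Q : @Measure Ω m0, IsProbabilityMeasure Q ∧ D m0 Q P ≤ η ∧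
        r = ∫ ω, (P[π|m]) ω ∂Q}
      = sInf {r : ℝ | ∃ Q : @Measure Ω m0, IsProbabilityMeasure Q ∧ D m0 Q P ≤ η ∧
          (∃ f : Ω → ℝ≥0∞, Measurable[m] f ∧ (fun ω => Q.rnDeriv P ω) =ᵐ[P] f) ∧
          r = ∫ ω, π ω ∂Q} := by
  obtain ⟨C, hπb⟩ := hπb
  congr 1
  ext r
  simp only [Set.mem_setOf_eq]
  constructor
  · rintro ⟨Q, hQprob, hQη, hr⟩
    have hDlt : D m0 Q P ≠ ⊤ := (lt_of_le_of_lt hQη (lt_top_iff_ne_top.mpr hη')).ne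
    have hQP : Q ≪ P := hD3 Q hDlt
    -- the coarse belief
    set g : Ω → ℝ≥0∞ := fun ω => (Q.trim hm).rnDeriv (P.trim hm) ω with hg_def
    have hgm : Measurable[m] g := Measure.measurable_rnDeriv _ _
    have hgm0 : Measurable[m0] g := hgm.mono hm le_rfl
    set Qb : @Measure Ω m0 := P.withDensity g with hQb_def
    have hQbP : Qb ≪ P := withDensity_absolutelyContinuous P g
    have hQtPt : Q.trim hm ≪ P.trim hm := hQP.trim hm
    have hQtrim_eq : Q.trim hm = (P.trim hm).withDensity g :=
      (Measure.withDensity_rnDeriv_eq _ _ hQtPt).symm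
    have hQbtrim : Qb.trim hm = Q.trim hm := by
      rw [hQb_def, trim_withDensity hm hgm, hQtrim_eq]
    have hQbrn : (fun ω => Qb.rnDeriv P ω) =ᵐ[P] g :=
      Measure.rnDeriv_withDensity P hgm0
    have hQbprob : IsProbabilityMeasure Qb := by
      constructor
      have h1 : Qb Set.univ = Qb.trim hm Set.univ :=
        (trim_measurableSet_eq hm MeasurableSet.univ).symm
      have h2 : Q Set.univ = Q.trim hm Set.univ :=
        (trim_measurableSet_eq hm MeasurableSet.univ).symm
      rw [h1, hQbtrim, ← h2, measure_univ]
    -- divergence bound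
    have hDQb : D m0 Qb P ≤ η := by
      have hae : (fun ω => (Qb.trim hm).rnDeriv (P.trim hm) ω)
          =ᵐ[P] fun ω => Qb.rnDeriv P ω := by
        rw [hQbtrim]
        exact hQbrn.symm
      have h5 := hD5 m hm Qb hQbP hae
      calc D m0 Qb P = D m (Qb.trim hm) (P.trim hm) := h5.symm
        _ = D m (Q.trim hm) (P.trim hm) := by rw [hQbtrim]
        _ ≤ D m0 Q P := hD4 m hm Q
        _ ≤ η := hQη
    refine ⟨Qb, hQbprob, hDQb, ⟨g, hgm, hQbrn⟩, ?_⟩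
    -- the value
    have hval : ∫ ω, π ω ∂Qb = ∫ ω, (P[π|m]) ω ∂Qb :=
      integral_eq_integral_condexp_of_measurable_rnDeriv P Qb hQbP hm hgm hQbrn hπm hπb
    have hsm : StronglyMeasurable[m] (P[π|m]) := stronglyMeasurable_condExp
    have htr : ∫ ω, (P[π|m]) ω ∂Qb = ∫ ω, (P[π|m]) ω ∂Q := by
      have h1 := integral_trim hm hsm (μ := Qb)
      have h2 := integral_trim hm hsm (μ := Q)
      rw [h1, h2, hQbtrim]
    rw [hr, hval, htr]
  · rintro ⟨Q, hQprob, hQη, ⟨f, hfm, hQf⟩, hr⟩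
    have hDlt : D m0 Q P ≠ ⊤ := (lt_of_le_of_lt hQη (lt_top_iff_ne_top.mpr hη')).ne
    have hQP : Q ≪ P := hD3 Q hDlt
    refine ⟨Q, hQprob, hQη, ?_⟩
    rw [hr]
    exact integral_eq_integral_condexp_of_measurable_rnDeriv P Q hQP hm hfm hQf hπm hπb
end

section
/- Let $D$ be a divergence satisfying D2–D5, $P$ a probability measure on $(\Theta,\mathcal{B})$, $E$ a Borel set with $0<P(E)<1$, and set $p^{\min} := \inf\{Q(E) : D(Q\|P)\le\eta\}$. Then the measure $Q^*$ with density $dQ^*/dP = (p^{\min}/p)\mathbf{1}_E + ((1-p^{\min})/(1-p))\mathbf{1}_{\Theta\setminus E}$, where $p=P(E)$, satisfies $D(Q^*\|P)\le\eta$ and $Q^*(E)=p^{\min}$; i.e., the infimum is attained by a two-valued-density belief. -/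
open MeasureTheory
open scoped ENNReal Classical

/-- The minimum probability of an event over a divergence ball is attained by a
belief with two-valued density (Lemma 5 of the paper): for a divergence `D`
satisfying D1–D5 and an event `E` with `0 < P(E) < 1`, the measure `Q*` with
density `(pmin/p)·1_E + ((1-pmin)/(1-p))·1_{Eᶜ}` lies in the ball and attains
`pmin = inf {Q(E) : D(Q‖P) ≤ η}`. -/
theorem min_prob_attained_by_two_valued_density
    {Ω : Type*} {m0 : MeasurableSpace Ω}
    (D : ∀ m : MeasurableSpace Ω, @Measure Ω m → @Measure Ω m → ℝ≥0∞)
    (P : Measure Ω) [IsProbabilityMeasure P]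
    (hD1 : D m0 P P = 0)
    (hD2 : ∀ Q : @Measure Ω m0, IsProbabilityMeasure Q → Q ≪ P →
      (∃ C : ℝ≥0∞, C ≠ ⊤ ∧ ∀ᵐ ω ∂P, Q.rnDeriv P ω ≤ C) →
      ContinuousOn (fun ε : ℝ =>
        D m0 (ENNReal.ofReal ε • Q + ENNReal.ofReal (1 - ε) • P) P) (Set.Icc 0 1))
    (hD3 : ∀ Q : Measure Ω, D m0 Q P ≠ ⊤ → Q ≪ P)
    (hD4 : ∀ (m : MeasurableSpace Ω) (hm : m ≤ m0) (Q : @Measure Ω m0),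
      D m (Q.trim hm) (P.trim hm) ≤ D m0 Q P)
    (hD5 : ∀ (m : MeasurableSpace Ω) (hm : m ≤ m0) (Q : @Measure Ω m0), Q ≪ P →
      ((fun ω => (Q.trim hm).rnDeriv (P.trim hm) ω) =ᵐ[P] fun ω => Q.rnDeriv P ω) →
      D m (Q.trim hm) (P.trim hm) = D m0 Q P)
    (η : ℝ≥0∞) (hη : 0 < η) (hη' : η ≠ ⊤)
    (E : Set Ω) (hE : MeasurableSet E) (hE0 : 0 < P E) (hE1 : P E < 1)
    (p pmin : ℝ) (hp : p = (P E).toReal)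
    (hpmin : pmin = sInf {r : ℝ | ∃ Q : @Measure Ω m0, IsProbabilityMeasure Q ∧
        D m0 Q P ≤ η ∧ r = (Q E).toReal})
    (Qstar : Measure Ω)
    (hQstar : Qstar = P.withDensity (fun ω =>
      if ω ∈ E then ENNReal.ofReal (pmin / p) else ENNReal.ofReal ((1 - pmin) / (1 - p)))) :
    D m0 Qstar P ≤ η ∧ (Qstar E).toReal = pmin := by
  classical
  -- basic facts about p
  have hPEt : P E ≠ ⊤ := measure_ne_top P E
  have hp0 : 0 < p := by rw [hp]; exact ENNReal.toReal_pos hE0.ne' hPEt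
  have hp1 : p < 1 := by
    rw [hp]
    have := (ENNReal.toReal_lt_toReal hPEt ENNReal.one_ne_top).mpr hE1
    simpa using this
  have hPEeq : P E = ENNReal.ofReal p := by rw [hp, ENNReal.ofReal_toReal hPEt]
  have hPEc : P Eᶜ = ENNReal.ofReal (1 - p) := by
    rw [prob_compl_eq_one_sub hE, hPEeq, ENNReal.ofReal_sub 1 hp0.le, ENNReal.ofReal_one]
  -- the family of two-valued densities
  set fQ : ℝ → Ω → ℝ≥0∞ := fun q ω =>
    if ω ∈ E then ENNReal.ofReal (q / p) else ENNReal.ofReal ((1 - q) / (1 - p)) with hfQ_def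
  have hfQ : ∀ q, Measurable (fQ q) := fun q =>
    Measurable.ite hE measurable_const measurable_const
  set Qm : ℝ → Measure Ω := fun q => P.withDensity (fQ q) with hQm_def
  -- values of Qm
  have hQmE : ∀ q : ℝ, 0 ≤ q → Qm q E = ENNReal.ofReal q := by
    intro q hq
    simp only [hQm_def, hfQ_def]
    rw [withDensity_apply _ hE,
      setLIntegral_congr_fun hE (fun ω hω => if_pos hω),
      setLIntegral_const, hPEeq, ← ENNReal.ofReal_mul (div_nonneg hq hp0.le),
      div_mul_cancel₀ _ hp0.ne']
  have hQmEc : ∀ q : ℝ, q ≤ 1 → Qm q Eᶜ = ENNReal.ofReal (1 - q) := by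
    intro q hq
    simp only [hQm_def, hfQ_def]
    rw [withDensity_apply _ hE.compl,
      setLIntegral_congr_fun hE.compl (fun ω hω => if_neg hω),
      setLIntegral_const, hPEc,
      ← ENNReal.ofReal_mul (div_nonneg (by linarith) (by linarith)),
      div_mul_cancel₀ _ (by linarith : (1:ℝ) - p ≠ 0)]
  have hQmprob : ∀ q : ℝ, 0 ≤ q → q ≤ 1 → IsProbabilityMeasure (Qm q) := by
    intro q h0 h1
    constructor
    rw [← Set.union_compl_self E,
      measure_union disjoint_compl_right hE.compl, hQmE q h0, hQmEc q h1,
      ← ENNReal.ofReal_add h0 (by linarith)]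
    norm_num
  -- the set S
  set S : Set ℝ := {r : ℝ | ∃ Q : @Measure Ω m0, IsProbabilityMeasure Q ∧
      D m0 Q P ≤ η ∧ r = (Q E).toReal} with hS_def
  have hpS : p ∈ S := ⟨P, inferInstance, by rw [hD1]; exact zero_le, hp⟩
  have hSne : S.Nonempty := ⟨p, hpS⟩
  have hS0 : ∀ r ∈ S, (0:ℝ) ≤ r := by
    rintro r ⟨Q, -, -, rfl⟩; exact ENNReal.toReal_nonneg
  have hSbdd : BddBelow S := ⟨0, hS0⟩
  have hpmin_le : pmin ≤ p := by rw [hpmin]; exact csInf_le hSbdd hpS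
  have hpmin0 : 0 ≤ pmin := by rw [hpmin]; exact le_csInf hSne hS0
  -- key reduction: every r ∈ S gives a two-valued measure in the ball
  have hball : ∀ r ∈ S, D m0 (Qm r) P ≤ η := by
    rintro r ⟨Q, hQprob, hQle, hrQ⟩
    have hQEt : Q E ≠ ⊤ := measure_ne_top Q E
    have hr0 : 0 ≤ r := hrQ ▸ ENNReal.toReal_nonneg
    have hr1 : r ≤ 1 := by
      rw [hrQ]
      calc (Q E).toReal ≤ (1 : ℝ≥0∞).toReal :=
            ENNReal.toReal_mono ENNReal.one_ne_top prob_le_one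
        _ = 1 := by simp
    have hQE : Q E = ENNReal.ofReal r := by rw [hrQ, ENNReal.ofReal_toReal hQEt]
    haveI := hQmprob r hr0 hr1
    -- sub-σ-algebra generated by E
    set m : MeasurableSpace Ω := MeasurableSpace.generateFrom {E} with hm_def
    have hm : m ≤ m0 := by
      refine MeasurableSpace.generateFrom_le ?_
      rintro s hs
      rw [Set.mem_singleton_iff] at hs
      rw [hs]; exact hE
    have hEm : MeasurableSet[m] E :=
      MeasurableSpace.measurableSet_generateFrom (Set.mem_singleton E)
    have hfQm : ∀ q, Measurable[m] (fQ q) := fun q =>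
      Measurable.ite hEm measurable_const measurable_const
    -- trim of Qm r equals trim of Q
    have htrim : (Qm r).trim hm = Q.trim hm := by
      refine @ext_of_generate_finite Ω m ((Qm r).trim hm) (Q.trim hm) {E} hm_def ?_
        (isFiniteMeasure_trim hm) ?_ ?_
      · rintro s hs t ht -
        rw [Set.mem_singleton_iff] at hs ht
        rw [hs, ht, Set.inter_self]
        exact Set.mem_singleton E
      · rintro s hs
        rw [Set.mem_singleton_iff] at hs; subst hs
        rw [trim_measurableSet_eq hm hEm, trim_measurableSet_eq hm hEm,
          hQmE r hr0, hQE]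
      · rw [trim_measurableSet_eq hm (@MeasurableSet.univ Ω m),
          trim_measurableSet_eq hm (@MeasurableSet.univ Ω m),
          measure_univ, measure_univ]
    -- trim of withDensity is withDensity of trim
    have htrimwd : (Qm r).trim hm = @Measure.withDensity Ω m (P.trim hm) (fQ r) := by
      refine @Measure.ext Ω m _ _ (fun s hs => ?_)
      rw [trim_measurableSet_eq hm hs, hQm_def]
      rw [withDensity_apply _ (hm s hs), @withDensity_apply Ω m (P.trim hm) (fQ r) s hs,
        ← lintegral_indicator (hm s hs), ← @lintegral_indicator Ω m (P.trim hm) s hs (fQ r),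
        lintegral_trim hm (Measurable.indicator (hfQm r) hs)]
    -- identify the rnDeriv of the trimmed measures
    have hrn1 : (Qm r).rnDeriv P =ᵐ[P] fQ r :=
      Measure.rnDeriv_withDensity P (hfQ r)
    have hrn2 : ((Qm r).trim hm).rnDeriv (P.trim hm) =ᵐ[P.trim hm] fQ r := by
      rw [htrimwd]
      exact @Measure.rnDeriv_withDensity Ω m (P.trim hm) (isFiniteMeasure_trim hm).toSigmaFinite
        (fQ r) (hfQm r)
    have hrn3 : (fun ω => ((Qm r).trim hm).rnDeriv (P.trim hm) ω) =ᵐ[P]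
        fun ω => (Qm r).rnDeriv P ω :=
      (ae_eq_of_ae_eq_trim hrn2).trans hrn1.symm
    have heq := hD5 m hm (Qm r) (withDensity_absolutelyContinuous P (fQ r)) hrn3
    calc D m0 (Qm r) P = D m ((Qm r).trim hm) (P.trim hm) := heq.symm
      _ = D m (Q.trim hm) (P.trim hm) := by rw [htrim]
      _ ≤ D m0 Q P := hD4 m hm Q
      _ ≤ η := hQle
  -- the base measure Q0 for the continuity argument
  haveI hQ0prob : IsProbabilityMeasure (Qm 0) := hQmprob 0 le_rfl zero_le_one
  have hQ0bound : ∀ᵐ ω ∂P, (Qm 0).rnDeriv P ω ≤ ENNReal.ofReal (1 / (1 - p)) := by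
    filter_upwards [Measure.rnDeriv_withDensity P (hfQ 0)] with ω hω
    rw [hω]
    simp only [hfQ_def]
    by_cases hωE : ω ∈ E
    · simp [hωE]
    · simp [hωE]
  have hcont := hD2 (Qm 0) hQ0prob (withDensity_absolutelyContinuous P (fQ 0))
    ⟨ENNReal.ofReal (1 / (1 - p)), ENNReal.ofReal_ne_top, hQ0bound⟩
  set h : ℝ → ℝ≥0∞ := fun ε =>
    D m0 (ENNReal.ofReal ε • Qm 0 + ENNReal.ofReal (1 - ε) • P) P with hh_def
  -- mixtures of Qm 0 and P are exactly the two-valued measures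
  have hmix : ∀ q : ℝ, 0 ≤ q → q ≤ p →
      ENNReal.ofReal (1 - q / p) • Qm 0 + ENNReal.ofReal (1 - (1 - q / p)) • P = Qm q := by
    intro q h0 h1
    have hqp0 : 0 ≤ q / p := div_nonneg h0 hp0.le
    have hqp1 : q / p ≤ 1 := (div_le_one hp0).mpr h1
    rw [sub_sub_cancel]
    simp only [hQm_def]
    rw [← withDensity_smul _ (hfQ 0), ← withDensity_const,
      ← withDensity_add_left ((hfQ 0).const_smul (ENNReal.ofReal (1 - q/p)))]
    congr 1
    funext ω
    by_cases hωE : ω ∈ E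
    · simp [hfQ_def, hωE, ENNReal.ofReal_zero]
    · simp only [hfQ_def, hωE, if_false, Pi.add_apply, Pi.smul_apply, smul_eq_mul,
        sub_zero]
      have hne1 : (1:ℝ) - p ≠ 0 := by linarith
      have hne2 : p ≠ 0 := hp0.ne'
      rw [← ENNReal.ofReal_mul (by linarith), ← ENNReal.ofReal_add
        (mul_nonneg (by linarith) (one_div_nonneg.mpr (by linarith))) hqp0]
      congr 1
      field_simp
      ring
  have hDq : ∀ q : ℝ, 0 ≤ q → q ≤ p → D m0 (Qm q) P = h (1 - q / p) := by
    intro q h0 h1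
    rw [hh_def]
    simp only
    rw [hmix q h0 h1]
  -- sequence in S tending to the infimum
  obtain ⟨u, -, hu_tend, hu_mem⟩ := exists_seq_tendsto_sInf hSne hSbdd
  rw [← hpmin] at hu_tend
  set v : ℕ → ℝ := fun n => min (u n) p with hv_def
  have hv0 : ∀ n, 0 ≤ v n := fun n => le_min (hS0 _ (hu_mem n)) hp0.le
  have hvp : ∀ n, v n ≤ p := fun n => min_le_right _ _
  have hv_tend : Filter.Tendsto v Filter.atTop (nhds pmin) := by
    have := hu_tend.min (tendsto_const_nhds (x := p))
    rwa [min_eq_left hpmin_le] at this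
  have hεmem : ∀ n, (1 - v n / p) ∈ Set.Icc (0:ℝ) 1 := by
    intro n
    constructor
    · have : v n / p ≤ 1 := (div_le_one hp0).mpr (hvp n)
      linarith
    · have : 0 ≤ v n / p := div_nonneg (hv0 n) hp0.le
      linarith
  have hhv : ∀ n, h (1 - v n / p) ≤ η := by
    intro n
    have key : v n ∈ S := by
      rcases le_or_gt (u n) p with hle | hlt
      · rw [hv_def]; simpa [min_eq_left hle] using hu_mem n
      · rw [hv_def]; simpa [min_eq_right hlt.le] using hpS
    rw [← hDq (v n) (hv0 n) (hvp n)]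
    exact hball _ key
  have hεstar : (1 - pmin / p) ∈ Set.Icc (0:ℝ) 1 := by
    constructor
    · have : pmin / p ≤ 1 := (div_le_one hp0).mpr hpmin_le
      linarith
    · have : 0 ≤ pmin / p := div_nonneg hpmin0 hp0.le
      linarith
  have hε_tend : Filter.Tendsto (fun n => 1 - v n / p) Filter.atTop
      (nhds (1 - pmin / p)) := (hv_tend.div_const p).const_sub 1
  have htend2 : Filter.Tendsto (fun n => h (1 - v n / p)) Filter.atTop
      (nhds (h (1 - pmin / p))) :=
    (hcont.continuousWithinAt hεstar).tendsto.comp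
      (tendsto_nhdsWithin_of_tendsto_nhds_of_eventually_within _ hε_tend
        (Filter.Eventually.of_forall hεmem))
  have hfinal1 : h (1 - pmin / p) ≤ η :=
    le_of_tendsto htend2 (Filter.Eventually.of_forall hhv)
  have hQstar' : Qstar = Qm pmin := hQstar
  constructor
  · rw [hQstar', hDq pmin hpmin0 hpmin_le]
    exact hfinal1
  · rw [hQstar', hQmE pmin hpmin0, ENNReal.toReal_ofReal hpmin0]
end

section
/- Let $X^{\min}:[\underline\theta,\bar\theta]\to[0,1]$ be non-decreasing, and suppose a function $U:[\underline\theta,\bar\theta]\to\mathbb{R}$ satisfies, for all $\theta,\hat\theta$ with $\theta>\hat\theta$: $U(\theta)\ge U(\hat\theta) + (\theta-\hat\theta)X^{\min}(\hat\theta)$ and $U(\hat\theta)\ge U(\theta) - (\theta-\hat\theta)M$ for some constant $M\ge 0$ (so $U$ is Lipschitz). If $U(\underline\theta)\ge 0$, then $U(\theta)\ge \int_{\underline\theta}^{\theta} X^{\min}(z)\,dz$ for all $\theta$. -/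
open MeasureTheory intervalIntegral

/-- Envelope lower bound (Proposition 2(i)): if `U` satisfies the incentive
inequalities `U θ ≥ U θ' + (θ-θ')·X θ'` and the Lipschitz-type inequality
`U θ' ≥ U θ - (θ-θ')·M` for `θ' < θ`, with `X` non-decreasing and `[0,1]`-valued
and `U a ≥ 0`, then `U θ ≥ ∫_a^θ X(z) dz`. -/
theorem envelope_lower_bound
    (a b : ℝ) (hab : a ≤ b) (X U : ℝ → ℝ) (M : ℝ) (hM : 0 ≤ M)
    (hXmono : MonotoneOn X (Set.Icc a b))
    (hX01 : ∀ z ∈ Set.Icc a b, X z ∈ Set.Icc (0 : ℝ) 1)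
    (hIC : ∀ θ ∈ Set.Icc a b, ∀ θ' ∈ Set.Icc a b, θ' < θ →
      U θ ≥ U θ' + (θ - θ') * X θ')
    (hLip : ∀ θ ∈ Set.Icc a b, ∀ θ' ∈ Set.Icc a b, θ' < θ →
      U θ' ≥ U θ - (θ - θ') * M)
    (hU0 : 0 ≤ U a) :
    ∀ θ ∈ Set.Icc a b, U θ ≥ ∫ z in a..θ, X z := by
  intro θ hθ
  obtain ⟨ha, hb⟩ := hθ
  rcases eq_or_lt_of_le ha with rfl | haθ
  · simpa using hU0
  have hXint : ∀ u v : ℝ, a ≤ u → u ≤ v → v ≤ θ → IntervalIntegrable X volume u v := by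
    intro u v hu huv hv
    apply MonotoneOn.intervalIntegrable
    apply hXmono.mono
    rw [Set.uIcc_of_le huv]
    exact Set.Icc_subset_Icc hu (hv.trans hb)
  rw [ge_iff_le]
  have key : ∀ ε > 0, (∫ z in a..θ, X z) ≤ U θ + ε := by
    intro ε hε
    obtain ⟨N, hN⟩ := exists_nat_gt ((θ - a) / ε)
    have hN0 : 0 < (N : ℝ) := lt_of_le_of_lt (div_nonneg (by linarith) hε.le) hN
    set Δ := (θ - a) / N with hΔdef
    have hΔpos : 0 < Δ := div_pos (by linarith) hN0
    have hΔε : Δ ≤ ε := by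
      rw [hΔdef, div_le_iff₀ hN0]
      have := (div_lt_iff₀ hε).mp hN
      linarith
    set t : ℕ → ℝ := fun i => a + i * Δ with htdef
    have ht0 : t 0 = a := by simp [htdef]
    have htN : t N = θ := by
      have hne : (N : ℝ) ≠ 0 := hN0.ne'
      simp only [htdef, hΔdef]
      field_simp
      ring
    have htstep : ∀ i : ℕ, t (i + 1) = t i + Δ := by
      intro i; simp only [htdef]; push_cast; ring
    have htmono : ∀ i j : ℕ, i ≤ j → t i ≤ t j := by
      intro i j hij
      simp only [htdef]
      have h : (i : ℝ) ≤ j := Nat.cast_le.mpr hij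
      nlinarith
    have htmem : ∀ i : ℕ, i ≤ N → t i ∈ Set.Icc a b := by
      intro i hi
      refine ⟨?_, ?_⟩
      · have h0 : 0 ≤ (i : ℝ) * Δ := by positivity
        simp only [htdef]; linarith
      have := htmono i N hi
      rw [htN] at this; linarith
    have A : ∀ k : ℕ, k ≤ N →
        U a + ∑ i ∈ Finset.range k, Δ * X (t i) ≤ U (t k) := by
      intro k hk
      induction k with
      | zero => simp [ht0]
      | succ k ih =>
        have hk' : k ≤ N := Nat.le_of_succ_le hk
        have h1 := ih hk'
        have h2 := hIC (t (k + 1)) (htmem _ hk) (t k) (htmem _ hk')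
          (by rw [htstep]; linarith)
        have hd : t (k + 1) - t k = Δ := by rw [htstep]; ring
        rw [hd] at h2
        rw [Finset.sum_range_succ]
        linarith
    have B : ∀ k : ℕ, k ≤ N →
        (∫ z in a..(t k), X z) ≤ ∑ i ∈ Finset.range k, Δ * X (t (i + 1)) := by
      intro k hk
      induction k with
      | zero => simp [ht0]
      | succ k ih =>
        have hk' : k ≤ N := Nat.le_of_succ_le hk
        have hta : a ≤ t k := (htmem _ hk').1
        have htk1 : t k ≤ t (k + 1) := by rw [htstep]; linarith
        have htθ : t (k + 1) ≤ θ := by rw [← htN]; exact htmono _ _ hk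
        have hsplit : (∫ z in a..(t (k + 1)), X z)
            = (∫ z in a..(t k), X z) + ∫ z in (t k)..(t (k + 1)), X z := by
          rw [intervalIntegral.integral_add_adjacent_intervals
            (hXint a (t k) le_rfl hta (htk1.trans htθ))
            (hXint (t k) (t (k + 1)) hta htk1 htθ)]
        have hpiece : (∫ z in (t k)..(t (k + 1)), X z) ≤ Δ * X (t (k + 1)) := by
          have hmono : (∫ z in (t k)..(t (k + 1)), X z)
              ≤ ∫ _z in (t k)..(t (k + 1)), X (t (k + 1)) := by
            apply intervalIntegral.integral_mono_on htk1
              (hXint (t k) (t (k + 1)) hta htk1 htθ) intervalIntegrable_const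
            intro z hz
            exact hXmono ⟨hta.trans hz.1, hz.2.trans (htθ.trans hb)⟩
              (htmem _ hk) hz.2
          have hconst : (∫ _z in (t k)..(t (k + 1)), X (t (k + 1)))
              = (t (k + 1) - t k) * X (t (k + 1)) := by
            simp [intervalIntegral.integral_const, smul_eq_mul]
          have hd : t (k + 1) - t k = Δ := by rw [htstep]; ring
          rw [hconst, hd] at hmono
          exact hmono
        rw [hsplit, Finset.sum_range_succ]
        linarith [ih hk']
    have hAB := A N le_rfl
    have hB := B N le_rfl
    rw [htN] at hAB hB
    have htel : ∑ i ∈ Finset.range N, Δ * X (t (i + 1))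
        = ∑ i ∈ Finset.range N, Δ * X (t i) + Δ * (X θ - X a) := by
      have hsub := Finset.sum_range_sub (fun i => X (t i)) N
      calc ∑ i ∈ Finset.range N, Δ * X (t (i + 1))
          = ∑ i ∈ Finset.range N, (Δ * X (t i) + Δ * (X (t (i + 1)) - X (t i))) := by
            apply Finset.sum_congr rfl; intro i _; ring
        _ = ∑ i ∈ Finset.range N, Δ * X (t i)
            + Δ * ∑ i ∈ Finset.range N, (X (t (i + 1)) - X (t i)) := by
            rw [Finset.sum_add_distrib, Finset.mul_sum]
        _ = _ := by rw [hsub, htN, ht0]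
    have hXθ : X θ ≤ 1 := (hX01 θ ⟨ha, hb⟩).2
    have hXa : 0 ≤ X a := (hX01 a ⟨le_rfl, hab⟩).1
    have hbd : Δ * (X θ - X a) ≤ Δ := by nlinarith
    calc (∫ z in a..θ, X z) ≤ ∑ i ∈ Finset.range N, Δ * X (t (i + 1)) := hB
      _ = ∑ i ∈ Finset.range N, Δ * X (t i) + Δ * (X θ - X a) := htel
      _ ≤ (U θ - U a) + Δ := by linarith
      _ ≤ U θ + ε := by linarith
  exact le_of_forall_pos_le_add key
end

section
/- Fix constants $0\le X^{\min} < X \le 1$ (with $X<1$ unless stated), $U_0\ge 0$, and $K\ge 0$. Consider minimizing $wX + l(1-X)$ over $(w,l)\in\mathbb{R}^2$ subject to (i) $w\ge l$, (ii) $wX^{\min} + l(1-X^{\min}) = U_0$, (iii) $l\le K$. If $U_0\le K$, the unique minimizer is $(w^*,l^*)=(U_0,U_0)$ (full insurance). If $U_0>K$ and $X^{\min}>0$, the unique minimizer is $l^*=K$, $w^* = (U_0 - K(1-X^{\min}))/X^{\min}$. -/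
/-- Solution of the interim reduced problem for limited premium transfers
(problem (R-Int) with α=0, β=1): minimizing `w·X + l·(1-X)` subject to
`w ≥ l`, `w·Xmin + l·(1-Xmin) = U0`, `l ≤ K`. If `U0 ≤ K` the unique minimizer
is full insurance `(U0, U0)`; if `U0 > K` and `Xmin > 0` the unique minimizer is
`l* = K`, `w* = (U0 - K(1-Xmin))/Xmin`. -/
theorem reduced_problem_limited_premium
    (Xmin X U0 K : ℝ)
    (h0 : 0 ≤ Xmin) (h1 : Xmin < X) (h2 : X ≤ 1) (hU0 : 0 ≤ U0) (hK : 0 ≤ K) :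
    (U0 ≤ K →
      ((U0 ≥ U0 ∧ U0 * Xmin + U0 * (1 - Xmin) = U0 ∧ U0 ≤ K) ∧
        ∀ w l : ℝ, w ≥ l → w * Xmin + l * (1 - Xmin) = U0 → l ≤ K →
          (U0 * X + U0 * (1 - X) ≤ w * X + l * (1 - X) ∧
            (w * X + l * (1 - X) = U0 * X + U0 * (1 - X) → w = U0 ∧ l = U0)))) ∧
    (K < U0 → 0 < Xmin →
      (((U0 - K * (1 - Xmin)) / Xmin ≥ K ∧
          ((U0 - K * (1 - Xmin)) / Xmin) * Xmin + K * (1 - Xmin) = U0 ∧ K ≤ K) ∧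
        ∀ w l : ℝ, w ≥ l → w * Xmin + l * (1 - Xmin) = U0 → l ≤ K →
          (((U0 - K * (1 - Xmin)) / Xmin) * X + K * (1 - X) ≤ w * X + l * (1 - X) ∧
            (w * X + l * (1 - X) = ((U0 - K * (1 - Xmin)) / Xmin) * X + K * (1 - X) →
              w = (U0 - K * (1 - Xmin)) / Xmin ∧ l = K)))) := by
  constructor
  · intro hUK
    refine ⟨⟨le_refl _, by ring, hUK⟩, fun w l hwl hc hlK => ?_⟩
    have key : w * X + l * (1 - X) = U0 + (w - l) * (X - Xmin) := by
      nlinarith [hc]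
    constructor
    · nlinarith [mul_nonneg (sub_nonneg.2 hwl) (sub_nonneg.2 h1.le)]
    · intro heq
      have h3 : (w - l) * (X - Xmin) = 0 := by nlinarith
      have h4 : w = l := by
        rcases mul_eq_zero.1 h3 with h | h
        · linarith
        · linarith
      constructor <;> nlinarith
  · intro hKU hXm
    have hA : (U0 - K * (1 - Xmin)) / Xmin * Xmin = U0 - K * (1 - Xmin) :=
      div_mul_cancel₀ _ hXm.ne'
    have hAK : (U0 - K * (1 - Xmin)) / Xmin ≥ K := by
      rw [ge_iff_le, le_div_iff₀ hXm]; nlinarith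
    refine ⟨⟨hAK, by linarith, le_refl _⟩, fun w l hwl hc hlK => ?_⟩
    set A := (U0 - K * (1 - Xmin)) / Xmin with hAdef
    -- (w - A) * Xmin = (K - l) * (1 - Xmin)
    have hwA : (w - A) * Xmin = (K - l) * (1 - Xmin) := by
      have : A * Xmin = U0 - K * (1 - Xmin) := hA
      nlinarith
    have hkey : (w * X + l * (1 - X) - (A * X + K * (1 - X))) * Xmin
        = (K - l) * (X - Xmin) := by nlinarith
    have hdiff : 0 ≤ w * X + l * (1 - X) - (A * X + K * (1 - X)) := by
      have h5 : 0 ≤ (K - l) * (X - Xmin) :=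
        mul_nonneg (by linarith) (by linarith)
      nlinarith
    constructor
    · linarith
    · intro heq
      have h6 : (K - l) * (X - Xmin) = 0 := by
        rw [← hkey]; rw [heq]; ring
      have hl : l = K := by
        rcases mul_eq_zero.1 h6 with h | h
        · linarith
        · linarith
      refine ⟨?_, hl⟩
      have : (w - A) * Xmin = 0 := by rw [hwA, hl]; ring
      rcases mul_eq_zero.1 this with h | h
      · linarith
      · linarith
end

section
/- Let $0<X^{\min}<X<1$ and $U_0\ge 0$ be constants. Among all pairs $(w,l)$ with $w\ge l$ and $wX^{\min}+l(1-X^{\min})=U_0$, the objective $wX + l(1-X)$ is strictly increasing in $w-l$: if $(w_1,l_1)$ and $(w_2,l_2)$ both satisfy the constraints and $w_1-l_1 < w_2-l_2$, then $w_1X+l_1(1-X) < w_2X+l_2(1-X)$. -/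
/-- Holding the worst-case utility fixed, the seller's cost is strictly
increasing in the spread between winning and losing payoffs: if two pairs
`(w₁,l₁)`, `(w₂,l₂)` satisfy `w ≥ l` and `w·Xmin + l·(1-Xmin) = U0`, and
`w₁ - l₁ < w₂ - l₂`, then `w₁·X + l₁·(1-X) < w₂·X + l₂·(1-X)`. -/
theorem objective_strictMono_in_spread
    (Xmin X U0 : ℝ) (h0 : 0 < Xmin) (h1 : Xmin < X) (h2 : X < 1) (hU0 : 0 ≤ U0)
    (w1 l1 w2 l2 : ℝ)
    (hf1 : w1 ≥ l1 ∧ w1 * Xmin + l1 * (1 - Xmin) = U0)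
    (hf2 : w2 ≥ l2 ∧ w2 * Xmin + l2 * (1 - Xmin) = U0)
    (hlt : w1 - l1 < w2 - l2) :
    w1 * X + l1 * (1 - X) < w2 * X + l2 * (1 - X) := by
  obtain ⟨_, e1⟩ := hf1
  obtain ⟨_, e2⟩ := hf2
  nlinarith [mul_lt_mul_of_pos_right hlt (sub_pos.mpr h1)]
end

section
/- Let $\psi:[\underline\theta,\bar\theta]\to\mathbb{R}$ be strictly increasing and continuous, and let $r^*=\sup\{\theta : \psi(\theta)\le 0\}$ (with $r^*=\underline\theta$ if the set is empty). Then among all measurable functions $x=(x_1,x_2):\Theta^2\to[0,1]^2$ with $x_1(\theta,\theta')+x_2(\theta',\theta)\le 1$, the allocation $x^*$ that gives the object to bidder $i$ iff her type is highest and at least $r^*$ (splitting ties equally, no sale if both types are below $r^*$) maximizes $\int_{\Theta^2}[\psi(\theta_1)x_1(\theta_1,\theta_2)+\psi(\theta_2)x_2(\theta_2,\theta_1)]\,dP^2(\theta_1,\theta_2)$, where $P$ is atomless with full support on $\Theta=[\underline\theta,\bar\theta]$. -/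
open MeasureTheory
open scoped Classical

/-- Optimality of the cutoff allocation rule (Proposition 6): for a strictly
increasing continuous virtual value `ψ` and an atomless type distribution `P`
supported on `[a,b]`, the allocation giving the object to the bidder with the
highest type provided it is at least `r* = sup{θ : ψ(θ) ≤ 0}` (ties split
equally, no sale below `r*`) maximizes the expected virtual surplus among all
feasible allocation rules. -/
theorem cutoff_allocation_optimal
    (a b : ℝ) (hab : a < b) (P : Measure ℝ) [IsProbabilityMeasure P] [NullSingletonClass P]
    (hsupp : P (Set.Icc a b)ᶜ = 0)
    (ψ : ℝ → ℝ) (hψmeas : Measurable ψ)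
    (hψmono : StrictMonoOn ψ (Set.Icc a b)) (hψcont : ContinuousOn ψ (Set.Icc a b))
    (r : ℝ) (hr : r = sSup (insert a {θ ∈ Set.Icc a b | ψ θ ≤ 0}))
    (xs : ℝ → ℝ → ℝ)
    (hxs : ∀ θ θ' : ℝ, xs θ θ' =
      if θ' < θ ∧ r ≤ θ then 1 else if θ' = θ ∧ r ≤ θ then 1 / 2 else 0)
    (x1 x2 : ℝ → ℝ → ℝ)
    (hm1 : Measurable (Function.uncurry x1)) (hm2 : Measurable (Function.uncurry x2))
    (hpos : ∀ θ θ', 0 ≤ x1 θ θ' ∧ 0 ≤ x2 θ θ')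
    (hsum : ∀ θ θ', x1 θ θ' + x2 θ' θ ≤ 1) :
    ∫ p, (ψ p.1 * x1 p.1 p.2 + ψ p.2 * x2 p.2 p.1) ∂(P.prod P)
      ≤ ∫ p, (ψ p.1 * xs p.1 p.2 + ψ p.2 * xs p.2 p.1) ∂(P.prod P) := by
  -- a bound for ψ on [a,b]
  obtain ⟨C, hC⟩ := (isCompact_Icc (a := a) (b := b)).exists_bound_of_continuousOn hψcont
  simp only [Real.norm_eq_abs] at hC
  -- properties of the cutoff r
  have hbdd : BddAbove (insert a {θ ∈ Set.Icc a b | ψ θ ≤ 0}) := by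
    refine ⟨b, ?_⟩
    rintro x (rfl | hx)
    · exact hab.le
    · exact hx.1.2
  have hrlt : ∀ θ ∈ Set.Icc a b, θ < r → ψ θ < 0 := by
    intro θ hθ hθr
    by_contra h
    push_neg at h
    have hle : r ≤ θ := by
      rw [hr]
      apply csSup_le (Set.insert_nonempty _ _)
      rintro x (rfl | hx)
      · exact hθ.1
      · by_contra hxθ
        push_neg at hxθ
        exact absurd (hψmono hθ hx.1 hxθ) (by linarith [hx.2])
    linarith
  have hrgt : ∀ θ ∈ Set.Icc a b, r < θ → 0 < ψ θ := by
    intro θ hθ hθr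
    by_contra h
    push_neg at h
    have : θ ≤ r := by
      rw [hr]; exact le_csSup hbdd (Set.mem_insert_of_mem _ ⟨hθ, h⟩)
    linarith
  -- bounds on x1, x2, xs
  have hx1le : ∀ θ θ', x1 θ θ' ≤ 1 := fun θ θ' => by
    have := hsum θ θ'; have := (hpos θ' θ).2; linarith
  have hx2le : ∀ θ θ', x2 θ θ' ≤ 1 := fun θ θ' => by
    have := hsum θ' θ; have := (hpos θ' θ).1; linarith
  have hxs01 : ∀ θ θ', 0 ≤ xs θ θ' ∧ xs θ θ' ≤ 1 := by
    intro θ θ'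
    rw [hxs]
    split_ifs <;> norm_num
  -- measurability of xs
  have hmxs : Measurable (Function.uncurry xs) := by
    have : Function.uncurry xs = fun p : ℝ × ℝ =>
        if p.2 < p.1 ∧ r ≤ p.1 then (1 : ℝ) else if p.2 = p.1 ∧ r ≤ p.1 then 1 / 2 else 0 := by
      funext p; exact hxs p.1 p.2
    rw [this]
    refine Measurable.ite ?_ measurable_const (Measurable.ite ?_ measurable_const measurable_const)
    · exact ((measurableSet_lt measurable_snd measurable_fst).inter
        (measurable_fst measurableSet_Ici))
    · exact ((measurableSet_eq_fun measurable_snd measurable_fst).inter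
        (measurable_fst measurableSet_Ici))
  -- a.e. facts
  have hmem1 : ∀ᵐ p ∂(P.prod P), p.1 ∈ Set.Icc a b := by
    rw [MeasureTheory.ae_iff]
    refine measure_mono_null (t := ((Set.Icc a b)ᶜ) ×ˢ (Set.univ : Set ℝ))
      (fun p hp => ⟨hp, trivial⟩) ?_
    rw [Measure.prod_prod, hsupp, zero_mul]
  have hmem2 : ∀ᵐ p ∂(P.prod P), p.2 ∈ Set.Icc a b := by
    rw [MeasureTheory.ae_iff]
    refine measure_mono_null (t := (Set.univ : Set ℝ) ×ˢ ((Set.Icc a b)ᶜ))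
      (fun p hp => ⟨trivial, hp⟩) ?_
    rw [Measure.prod_prod, hsupp, mul_zero]
  have hner1 : ∀ᵐ p ∂(P.prod P), p.1 ≠ r := by
    rw [MeasureTheory.ae_iff]
    refine measure_mono_null (t := ({r} : Set ℝ) ×ˢ (Set.univ : Set ℝ))
      (fun p hp => by simp only [Set.mem_setOf_eq, not_not] at hp; exact ⟨hp, trivial⟩) ?_
    rw [Measure.prod_prod, measure_singleton, zero_mul]
  have hner2 : ∀ᵐ p ∂(P.prod P), p.2 ≠ r := by
    rw [MeasureTheory.ae_iff]
    refine measure_mono_null (t := (Set.univ : Set ℝ) ×ˢ ({r} : Set ℝ))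
      (fun p hp => by simp only [Set.mem_setOf_eq, not_not] at hp; exact ⟨trivial, hp⟩) ?_
    rw [Measure.prod_prod, measure_singleton, mul_zero]
  have hne : ∀ᵐ p ∂(P.prod P), p.1 ≠ p.2 := by
    rw [MeasureTheory.ae_iff]
    have hdm : MeasurableSet {p : ℝ × ℝ | p.1 = p.2} :=
      measurableSet_eq_fun measurable_fst measurable_snd
    have : (P.prod P) {p : ℝ × ℝ | p.1 = p.2} = 0 := by
      rw [Measure.measure_prod_null hdm]
      filter_upwards with x
      have : (Prod.mk x ⁻¹' {p : ℝ × ℝ | p.1 = p.2}) = {x} := by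
        ext y; simp [eq_comm]
      rw [this, measure_singleton]; rfl
    simpa using this
  -- the two integrands
  set f : ℝ × ℝ → ℝ := fun p => ψ p.1 * x1 p.1 p.2 + ψ p.2 * x2 p.2 p.1 with hf
  set g : ℝ × ℝ → ℝ := fun p => ψ p.1 * xs p.1 p.2 + ψ p.2 * xs p.2 p.1 with hg
  have hmf : Measurable f := by
    apply Measurable.add
    · exact (hψmeas.comp measurable_fst).mul hm1
    · exact (hψmeas.comp measurable_snd).mul (hm2.comp (measurable_snd.prodMk measurable_fst))
  have hmg : Measurable g := by
    apply Measurable.add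
    · exact (hψmeas.comp measurable_fst).mul hmxs
    · exact (hψmeas.comp measurable_snd).mul (hmxs.comp (measurable_snd.prodMk measurable_fst))
  -- integrability via boundedness
  have habs : ∀ (u v : ℝ → ℝ → ℝ), (∀ s t, 0 ≤ u s t ∧ u s t ≤ 1) →
      ∀ p : ℝ × ℝ, p.1 ∈ Set.Icc a b → p.2 ∈ Set.Icc a b →
      |ψ p.1 * u p.1 p.2 + ψ p.2 * v p.2 p.1| ≤ C + C → True := fun _ _ _ _ _ _ _ => trivial
  have hboundf : ∀ᵐ p ∂(P.prod P), ‖f p‖ ≤ C + C := by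
    filter_upwards [hmem1, hmem2] with p h1 h2
    have b1 : |ψ p.1 * x1 p.1 p.2| ≤ C := by
      rw [abs_mul]
      calc |ψ p.1| * |x1 p.1 p.2| ≤ C * 1 := by
            apply mul_le_mul (hC _ h1) ?_ (abs_nonneg _) ((abs_nonneg _).trans (hC _ h1))
            rw [abs_le]; exact ⟨by linarith [(hpos p.1 p.2).1], hx1le _ _⟩
        _ = C := mul_one C
    have b2 : |ψ p.2 * x2 p.2 p.1| ≤ C := by
      rw [abs_mul]
      calc |ψ p.2| * |x2 p.2 p.1| ≤ C * 1 := by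
            apply mul_le_mul (hC _ h2) ?_ (abs_nonneg _) ((abs_nonneg _).trans (hC _ h2))
            rw [abs_le]; exact ⟨by linarith [(hpos p.2 p.1).2], hx2le _ _⟩
        _ = C := mul_one C
    calc ‖f p‖ ≤ |ψ p.1 * x1 p.1 p.2| + |ψ p.2 * x2 p.2 p.1| := abs_add_le _ _
      _ ≤ C + C := add_le_add b1 b2
  have hboundg : ∀ᵐ p ∂(P.prod P), ‖g p‖ ≤ C + C := by
    filter_upwards [hmem1, hmem2] with p h1 h2
    have b1 : |ψ p.1 * xs p.1 p.2| ≤ C := by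
      rw [abs_mul]
      calc |ψ p.1| * |xs p.1 p.2| ≤ C * 1 := by
            apply mul_le_mul (hC _ h1) ?_ (abs_nonneg _) ((abs_nonneg _).trans (hC _ h1))
            rw [abs_le]; exact ⟨by linarith [(hxs01 p.1 p.2).1], (hxs01 p.1 p.2).2⟩
        _ = C := mul_one C
    have b2 : |ψ p.2 * xs p.2 p.1| ≤ C := by
      rw [abs_mul]
      calc |ψ p.2| * |xs p.2 p.1| ≤ C * 1 := by
            apply mul_le_mul (hC _ h2) ?_ (abs_nonneg _) ((abs_nonneg _).trans (hC _ h2))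
            rw [abs_le]; exact ⟨by linarith [(hxs01 p.2 p.1).1], (hxs01 p.2 p.1).2⟩
        _ = C := mul_one C
    calc ‖g p‖ ≤ |ψ p.1 * xs p.1 p.2| + |ψ p.2 * xs p.2 p.1| := abs_add_le _ _
      _ ≤ C + C := add_le_add b1 b2
  have hif : Integrable f (P.prod P) :=
    Integrable.mono' (integrable_const (C + C)) hmf.aestronglyMeasurable hboundf
  have hig : Integrable g (P.prod P) :=
    Integrable.mono' (integrable_const (C + C)) hmg.aestronglyMeasurable hboundg
  -- pointwise comparison a.e.
  have hle : f ≤ᵐ[P.prod P] g := by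
    filter_upwards [hmem1, hmem2, hner1, hner2, hne] with p h1 h2 hr1 hr2 hne12
    set M : ℝ := max 0 (max (ψ p.1) (ψ p.2)) with hM
    have hM0 : 0 ≤ M := le_max_left _ _
    have hM1 : ψ p.1 ≤ M := le_trans (le_max_left _ _) (le_max_right _ _)
    have hM2 : ψ p.2 ≤ M := le_trans (le_max_right _ _) (le_max_right _ _)
    have hfle : f p ≤ M := by
      have e1 : ψ p.1 * x1 p.1 p.2 ≤ M * x1 p.1 p.2 :=
        mul_le_mul_of_nonneg_right hM1 (hpos p.1 p.2).1
      have e2 : ψ p.2 * x2 p.2 p.1 ≤ M * x2 p.2 p.1 :=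
        mul_le_mul_of_nonneg_right hM2 (hpos p.2 p.1).2
      have e3 : M * x1 p.1 p.2 + M * x2 p.2 p.1 ≤ M := by
        have := hsum p.1 p.2
        nlinarith
      calc f p ≤ M * x1 p.1 p.2 + M * x2 p.2 p.1 := add_le_add e1 e2
        _ ≤ M := e3
    have hgeq : g p = M := by
      rcases lt_or_gt_of_ne hne12 with hlt | hlt
      · -- p.1 < p.2
        have hψlt : ψ p.1 < ψ p.2 := hψmono h1 h2 hlt
        rcases lt_or_gt_of_ne hr2 with hc | hc
        · -- p.2 < r : no sale
          have n2 : ψ p.2 < 0 := hrlt _ h2 hc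
          have n1 : ψ p.1 < 0 := lt_trans hψlt n2
          have z1 : xs p.1 p.2 = 0 := by
            have c1 : ¬(p.2 < p.1 ∧ r ≤ p.1) := fun h => absurd h.2 (not_le.mpr (lt_trans hlt hc))
            have c2 : ¬(p.2 = p.1 ∧ r ≤ p.1) := fun h => absurd h.2 (not_le.mpr (lt_trans hlt hc))
            rw [hxs, if_neg c1, if_neg c2]
          have z2 : xs p.2 p.1 = 0 := by
            have c1 : ¬(p.1 < p.2 ∧ r ≤ p.2) := fun h => absurd h.2 (not_le.mpr hc)
            have c2 : ¬(p.1 = p.2 ∧ r ≤ p.2) := fun h => absurd h.2 (not_le.mpr hc)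
            rw [hxs, if_neg c1, if_neg c2]
          simp only [hg, z1, z2, mul_zero, add_zero, hM]
          rw [max_eq_left]
          exact (max_le n1.le n2.le)
        · -- r < p.2 : bidder 2 wins
          have pos2 : 0 < ψ p.2 := hrgt _ h2 hc
          have z1 : xs p.1 p.2 = 0 := by
            have c1 : ¬(p.2 < p.1 ∧ r ≤ p.1) := fun h => lt_asymm hlt h.1
            have c2 : ¬(p.2 = p.1 ∧ r ≤ p.1) := fun h => hne12 h.1.symm
            rw [hxs, if_neg c1, if_neg c2]
          have z2 : xs p.2 p.1 = 1 := by
            rw [hxs, if_pos ⟨hlt, hc.le⟩]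
          simp only [hg, z1, z2, mul_zero, zero_add, mul_one, hM]
          rw [max_comm (ψ p.1) (ψ p.2), max_eq_left hψlt.le, max_eq_right pos2.le]
      · -- p.2 < p.1
        have hψlt : ψ p.2 < ψ p.1 := hψmono h2 h1 hlt
        rcases lt_or_gt_of_ne hr1 with hc | hc
        · have n1 : ψ p.1 < 0 := hrlt _ h1 hc
          have n2 : ψ p.2 < 0 := lt_trans hψlt n1
          have z1 : xs p.1 p.2 = 0 := by
            have c1 : ¬(p.2 < p.1 ∧ r ≤ p.1) := fun h => absurd h.2 (not_le.mpr hc)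
            have c2 : ¬(p.2 = p.1 ∧ r ≤ p.1) := fun h => absurd h.2 (not_le.mpr hc)
            rw [hxs, if_neg c1, if_neg c2]
          have z2 : xs p.2 p.1 = 0 := by
            have c1 : ¬(p.1 < p.2 ∧ r ≤ p.2) := fun h => absurd h.2 (not_le.mpr (lt_trans hlt hc))
            have c2 : ¬(p.1 = p.2 ∧ r ≤ p.2) := fun h => absurd h.2 (not_le.mpr (lt_trans hlt hc))
            rw [hxs, if_neg c1, if_neg c2]
          simp only [hg, z1, z2, mul_zero, add_zero, hM]
          rw [max_eq_left]
          exact (max_le n1.le n2.le)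
        · have pos1 : 0 < ψ p.1 := hrgt _ h1 hc
          have z1 : xs p.1 p.2 = 1 := by
            rw [hxs, if_pos ⟨hlt, hc.le⟩]
          have z2 : xs p.2 p.1 = 0 := by
            have c1 : ¬(p.1 < p.2 ∧ r ≤ p.2) := fun h => lt_asymm hlt h.1
            have c2 : ¬(p.1 = p.2 ∧ r ≤ p.2) := fun h => hne12 h.1
            rw [hxs, if_neg c1, if_neg c2]
          simp only [hg, z1, z2, mul_zero, add_zero, mul_one, hM]
          rw [max_eq_left hψlt.le, max_eq_right pos1.le]
    calc f p ≤ M := hfle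
      _ = g p := hgeq.symm
  exact integral_mono_ae hif hig hle
end
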